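/- For every integer n ≥ 1 and every antichain 𝓐 in 𝔹•^n, the cardinality of 𝓐 is at most C(2n, n); moreover, the set 𝔹⊛^n of words in 𝔹•^n in which the symbol • and the symbol ∗ occur the same number of times is an antichain in 𝔹•^n of cardinality exactly C(2n, n). -/

import Mathlib

/-- The alphabet 𝔹• = {0, 1, ∗, •}. -/
inductive BB : Type
  | zero
  | one
  | star
  | reject
deriving DecidableEq

instance : Fintype BB :=
  ⟨{BB.zero, BB.one, BB.star, BB.reject}, by intro x; cases x <;> simp⟩

/-- The partial order ≼ on 𝔹•: • ≼ 0, 1, ∗ and 0, 1 ≼ ∗ (0, 1 incomparable). -/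
def BBle : BB → BB → Prop := fun a b => a = BB.reject ∨ b = BB.star ∨ a = b

/-- Componentwise extension of ≼ to words over 𝔹•. -/
def wordLe {n : ℕ} (u v : Fin n → BB) : Prop := ∀ j, BBle (u j) (v j)

namespace BBaux

def Lb : BB → Bool
  | BB.zero => true
  | BB.star => true
  | _ => false

def Rb : BB → Bool
  | BB.one => true
  | BB.star => true
  | _ => false

lemma bble_iff (a b : BB) : BBle a b ↔ ((Lb a = true → Lb b = true) ∧ (Rb a = true → Rb b = true)) := by
  cases a <;> cases b <;> simp [BBle, Lb, Rb]

lemma letter_ext (a b : BB) (h1 : Lb a = Lb b) (h2 : Rb a = Rb b) : a = b := by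
  revert a b; decide

def toSet {n : ℕ} (v : Fin n → BB) : Finset (Fin n ⊕ Fin n) :=
  Finset.univ.filter (fun s => Sum.elim (fun j => Lb (v j)) (fun j => Rb (v j)) s = true)

lemma mem_toSet_inl {n : ℕ} (v : Fin n → BB) (j : Fin n) :
    Sum.inl j ∈ toSet v ↔ Lb (v j) = true := by
  simp [toSet]

lemma mem_toSet_inr {n : ℕ} (v : Fin n → BB) (j : Fin n) :
    Sum.inr j ∈ toSet v ↔ Rb (v j) = true := by
  simp [toSet]

lemma wordLe_iff {n : ℕ} (u v : Fin n → BB) : wordLe u v ↔ toSet u ⊆ toSet v := by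
  constructor
  · intro h s hs
    rcases s with j | j
    · rw [mem_toSet_inl] at hs ⊢
      exact ((bble_iff _ _).1 (h j)).1 hs
    · rw [mem_toSet_inr] at hs ⊢
      exact ((bble_iff _ _).1 (h j)).2 hs
  · intro h j
    rw [bble_iff]
    constructor
    · intro hl
      exact (mem_toSet_inl v j).1 (h ((mem_toSet_inl u j).2 hl))
    · intro hr
      exact (mem_toSet_inr v j).1 (h ((mem_toSet_inr u j).2 hr))

lemma toSet_injective {n : ℕ} : Function.Injective (toSet (n := n)) := by
  intro u v h
  funext j
  apply letter_ext
  · have h1 : (Lb (u j) = true) ↔ (Lb (v j) = true) := by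
      rw [← mem_toSet_inl, ← mem_toSet_inl, h]
    cases hb : Lb (u j) <;> cases hc : Lb (v j) <;> simp_all
  · have h1 : (Rb (u j) = true) ↔ (Rb (v j) = true) := by
      rw [← mem_toSet_inr, ← mem_toSet_inr, h]
    cases hb : Rb (u j) <;> cases hc : Rb (v j) <;> simp_all

lemma card_toSet {n : ℕ} (v : Fin n → BB) :
    (toSet v).card + (Finset.univ.filter (fun j => v j = BB.reject)).card =
      n + (Finset.univ.filter (fun j => v j = BB.star)).card := by
  classical
  have h1 : (toSet v).card = (∑ j, (if Lb (v j) = true then 1 else 0)) +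
      (∑ j, (if Rb (v j) = true then 1 else 0)) := by
    rw [toSet, Finset.card_filter, Fintype.sum_sum_type]
    simp
    rw [Finset.card_filter, Finset.card_filter]
    congr 1 <;> exact Finset.sum_congr rfl (fun _ _ => by congr)
  have h2 : (Finset.univ.filter (fun j => v j = BB.reject)).card =
      ∑ j, (if v j = BB.reject then 1 else 0) := by rw [Finset.card_filter]
  have h3 : (Finset.univ.filter (fun j => v j = BB.star)).card =
      ∑ j, (if v j = BB.star then 1 else 0) := by rw [Finset.card_filter]
  have key : ∀ j ∈ Finset.univ, ((if Lb (v j) = true then 1 else 0) +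
      (if Rb (v j) = true then 1 else 0)) + (if v j = BB.reject then 1 else 0) =
      1 + (if v j = BB.star then 1 else 0) := by
    intro j _
    cases h : v j <;> simp [Lb, Rb]
  have hsum := Finset.sum_congr rfl key
  rw [Finset.sum_add_distrib, Finset.sum_add_distrib, Finset.sum_add_distrib] at hsum
  simp only [Finset.sum_const, Finset.card_univ, Fintype.card_fin, smul_eq_mul, mul_one] at hsum
  omega

def fromSet {n : ℕ} (S : Finset (Fin n ⊕ Fin n)) : Fin n → BB := fun j =>
  if Sum.inl j ∈ S then (if Sum.inr j ∈ S then BB.star else BB.zero)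
  else (if Sum.inr j ∈ S then BB.one else BB.reject)

lemma toSet_fromSet {n : ℕ} (S : Finset (Fin n ⊕ Fin n)) : toSet (fromSet S) = S := by
  ext s
  rcases s with j | j
  · rw [mem_toSet_inl, fromSet]
    by_cases h1 : Sum.inl j ∈ S <;> by_cases h2 : Sum.inr j ∈ S <;> simp [h1, h2, Lb]
  · rw [mem_toSet_inr, fromSet]
    by_cases h1 : Sum.inl j ∈ S <;> by_cases h2 : Sum.inr j ∈ S <;> simp [h1, h2, Rb]

end BBaux

open BBaux in
theorem antichain_Bdot_bound (n : ℕ) (hn : 1 ≤ n)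
    (A : Finset (Fin n → BB))
    (hanti : ∀ v ∈ A, ∀ w ∈ A, wordLe v w → v = w) :
    A.card ≤ (2 * n).choose n ∧
    ∀ W : Finset (Fin n → BB),
      W = Finset.univ.filter (fun v =>
        (Finset.univ.filter (fun j => v j = BB.reject)).card =
          (Finset.univ.filter (fun j => v j = BB.star)).card) →
      (∀ v ∈ W, ∀ w ∈ W, wordLe v w → v = w) ∧
      W.card = (2 * n).choose n := by
  classical
  have hcard2n : Fintype.card (Fin n ⊕ Fin n) = 2 * n := by
    simp [Fintype.card_sum, two_mul]
  have hmemW : ∀ v : Fin n → BB,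
      ((Finset.univ.filter (fun j => v j = BB.reject)).card =
        (Finset.univ.filter (fun j => v j = BB.star)).card) ↔ (toSet v).card = n := by
    intro v
    have h := card_toSet v
    constructor
    · intro he; omega
    · intro he; omega
  constructor
  · -- Sperner bound
    have hac : IsAntichain (· ⊆ ·) ((A.image toSet : Finset (Finset (Fin n ⊕ Fin n))) :
        Set (Finset (Fin n ⊕ Fin n))) := by
      intro S hS T hT hne hsub
      simp only [Finset.coe_image, Set.mem_image, Finset.mem_coe] at hS hT
      obtain ⟨u, hu, rfl⟩ := hS
      obtain ⟨w, hw, rfl⟩ := hT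
      exact hne (congrArg toSet (hanti u hu w hw ((wordLe_iff u w).2 hsub)))
    have hb := IsAntichain.sperner hac
    rw [hcard2n] at hb
    have hhalf : 2 * n / 2 = n := by omega
    rw [hhalf] at hb
    rwa [Finset.card_image_of_injective _ toSet_injective] at hb
  · intro W hW
    subst hW
    constructor
    · intro v hv w hw hle
      simp only [Finset.mem_filter] at hv hw
      have hv' := (hmemW v).1 hv.2
      have hw' := (hmemW w).1 hw.2
      apply toSet_injective
      apply Finset.eq_of_subset_of_card_le ((wordLe_iff v w).1 hle)
      omega
    · -- bijection with powersetCard n univ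
      have : (Finset.univ.filter (fun v : Fin n → BB =>
          (Finset.univ.filter (fun j => v j = BB.reject)).card =
            (Finset.univ.filter (fun j => v j = BB.star)).card)).card =
          (Finset.powersetCard n (Finset.univ : Finset (Fin n ⊕ Fin n))).card := by
        apply Finset.card_bij (fun v _ => toSet v)
        · intro v hv
          simp only [Finset.mem_filter] at hv
          rw [Finset.mem_powersetCard]
          exact ⟨Finset.subset_univ _, (hmemW v).1 hv.2⟩
        · intro u hu v hv h
          exact toSet_injective h
        · intro S hS
          rw [Finset.mem_powersetCard] at hS
          refine ⟨fromSet S, ?_, (toSet_fromSet S).symm ▸ rfl⟩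
          simp only [Finset.mem_filter]
          refine ⟨Finset.mem_univ _, (hmemW _).2 ?_⟩
          rw [toSet_fromSet]
          exact hS.2
      rw [this, Finset.card_powersetCard, Finset.card_univ, hcard2n]
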